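/- Monotonicity of the moment complexity: let p > q > 0, α ≥ 1 and γ ∈ ℝ \ {2}, and let f be a probability density function supported in (0, ∞). Set c = α|2−γ| and define h(s) = (cs)^{(1−α)/α} f( (cs)^{1/α} / |2−γ| ) for s > 0 and h(s) = 0 for s ≤ 0 (this h is, up to dilation and reflection, the composed transform 𝔇_γ𝔈_α𝔘_γ[f]). Then h is a probability density function and, whenever the four moments involved are finite and nonzero, the moment complexity does not decrease: σ_p[h]/σ_q[h] ≥ σ_p[f]/σ_q[f]. -/

import Mathlib

open MeasureTheory Set Filter Topology

noncomputable section

private lemma my_measurable_rpow_const (a : ℝ) : Measurable fun x : ℝ => x ^ a := by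
  apply measurable_of_measurable_on_compl_singleton (0 : ℝ)
  apply Continuous.measurable
  apply continuousOn_iff_continuous_restrict.1
  intro x hx
  exact (Real.continuousAt_rpow_const x a (Or.inl hx)).continuousWithinAt

/-- Change of variables: both the integral identity and integrability transfer for the
transformed density. -/
private lemma my_cv (f : ℝ → ℝ) (α c b r : ℝ) (hα : 0 < α) (hb : 0 < b) (hc : c = α * b) :
    ((∫ s in Ioi (0:ℝ), s ^ r * ((c * s) ^ ((1 - α) / α) * f ((c * s) ^ ((1:ℝ) / α) / b)))
        = (b ^ α / c) ^ r * ∫ x in Ioi (0:ℝ), x ^ (α * r) * f x)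
    ∧ (IntegrableOn
          (fun s => s ^ r * ((c * s) ^ ((1 - α) / α) * f ((c * s) ^ ((1:ℝ) / α) / b)))
          (Ioi (0:ℝ))
        ↔ IntegrableOn (fun x => x ^ (α * r) * f x) (Ioi (0:ℝ))) := by
  have hc0 : 0 < c := by rw [hc]; positivity
  set F : ℝ → ℝ := fun t => (t / c) ^ r * (t ^ ((1 - α) / α) * f (t ^ ((1:ℝ) / α) / b))
    with hF
  set G : ℝ → ℝ := fun u => (α * (u ^ α / c) ^ r) * f (u / b) with hG
  have eq1 : EqOn (fun s : ℝ => s ^ r * ((c * s) ^ ((1 - α) / α) * f ((c * s) ^ ((1:ℝ) / α) / b)))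
      (fun s => F (c * s)) (Ioi 0) := by
    intro s _
    simp only [hF]
    rw [mul_div_cancel_left₀ _ hc0.ne']
  have eq2 : EqOn (fun u : ℝ => (|α| * u ^ (α - 1)) • F (u ^ α)) G (Ioi 0) := by
    intro u hu
    have hu0 : (0:ℝ) < u := hu
    have h1 : (u ^ α) ^ ((1:ℝ) / α) = u := by
      rw [← Real.rpow_mul hu0.le, mul_one_div_cancel hα.ne', Real.rpow_one]
    have h2 : (u ^ α) ^ ((1 - α) / α) = u ^ (1 - α) := by
      rw [← Real.rpow_mul hu0.le, mul_comm, div_mul_cancel₀ _ hα.ne']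
    have h3 : u ^ (α - 1) * u ^ (1 - α) = 1 := by
      rw [← Real.rpow_add hu0]
      norm_num
    simp only [hF, hG, smul_eq_mul, abs_of_pos hα, h1, h2]
    linear_combination (α * (u ^ α / c) ^ r * f (u / b)) * h3
  have eq3 : EqOn (fun x : ℝ => G (b * x))
      (fun x => (α * (b ^ α / c) ^ r) • (x ^ (α * r) * f x)) (Ioi 0) := by
    intro x hx
    have hx0 : (0:ℝ) < x := hx
    simp only [hG, smul_eq_mul]
    have e : (b * x) ^ α / c = b ^ α / c * x ^ α := by
      rw [Real.mul_rpow hb.le hx0.le]; ring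
    rw [mul_div_cancel_left₀ _ hb.ne', e,
      Real.mul_rpow (by positivity) (by positivity), ← Real.rpow_mul hx0.le]
    ring
  have hcomp_mul_c := integral_comp_mul_left_Ioi F 0 hc0
  rw [mul_zero] at hcomp_mul_c
  have hcomp_rpow := integral_comp_rpow_Ioi F hα.ne'
  have hcomp_mul_b := integral_comp_mul_left_Ioi G 0 hb
  rw [mul_zero] at hcomp_mul_b
  have hGflip : (∫ u in Ioi (0:ℝ), G u) = b • ∫ x in Ioi (0:ℝ), G (b * x) := by
    rw [hcomp_mul_b, smul_smul, mul_inv_cancel₀ hb.ne', one_smul]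
  have hne : (α * (b ^ α / c) ^ r) ≠ 0 := by positivity
  constructor
  · rw [setIntegral_congr_fun measurableSet_Ioi eq1, hcomp_mul_c, ← hcomp_rpow,
      setIntegral_congr_fun measurableSet_Ioi eq2, hGflip,
      setIntegral_congr_fun measurableSet_Ioi eq3]
    rw [integral_smul]
    simp only [smul_eq_mul]
    rw [hc]
    have hαb : α * b ≠ 0 := by positivity
    field_simp
  · have i1 : IntegrableOn
        (fun s => s ^ r * ((c * s) ^ ((1 - α) / α) * f ((c * s) ^ ((1:ℝ) / α) / b)))
        (Ioi (0:ℝ)) ↔ IntegrableOn (fun s => F (c * s)) (Ioi (0:ℝ)) :=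
      integrableOn_congr_fun eq1 measurableSet_Ioi
    have i2 : IntegrableOn (fun s => F (c * s)) (Ioi (0:ℝ)) ↔ IntegrableOn F (Ioi (0:ℝ)) := by
      simpa using integrableOn_Ioi_comp_mul_left_iff F (0:ℝ) hc0
    have i3 : IntegrableOn F (Ioi (0:ℝ))
        ↔ IntegrableOn (fun u => (|α| * u ^ (α - 1)) • F (u ^ α)) (Ioi (0:ℝ)) :=
      (integrableOn_Ioi_comp_rpow_iff F hα.ne').symm
    have i4 : IntegrableOn (fun u => (|α| * u ^ (α - 1)) • F (u ^ α)) (Ioi (0:ℝ))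
        ↔ IntegrableOn G (Ioi (0:ℝ)) := integrableOn_congr_fun eq2 measurableSet_Ioi
    have i5 : IntegrableOn G (Ioi (0:ℝ))
        ↔ IntegrableOn (fun x => G (b * x)) (Ioi (0:ℝ)) := by
      simpa using (integrableOn_Ioi_comp_mul_left_iff G (0:ℝ) hb).symm
    have i6 : IntegrableOn (fun x => G (b * x)) (Ioi (0:ℝ))
        ↔ IntegrableOn (fun x => (α * (b ^ α / c) ^ r) • (x ^ (α * r) * f x)) (Ioi (0:ℝ)) :=
      integrableOn_congr_fun eq3 measurableSet_Ioi
    have i7 : IntegrableOn (fun x => (α * (b ^ α / c) ^ r) • (x ^ (α * r) * f x)) (Ioi (0:ℝ))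
        ↔ IntegrableOn (fun x => x ^ (α * r) * f x) (Ioi (0:ℝ)) :=
      integrable_smul_iff hne _
    exact i1.trans (i2.trans (i3.trans (i4.trans (i5.trans (i6.trans i7)))))

/-- Hölder / Lyapunov interpolation for moments over `Ioi 0`. -/
private lemma my_holder (f : ℝ → ℝ) (hm : Measurable f) (hnn : ∀ x, 0 ≤ f x)
    (y z a b : ℝ) (ha : 0 < a) (hb : 0 < b) (hab : a + b = 1)
    (hy : IntegrableOn (fun x => x ^ y * f x) (Ioi (0:ℝ)))
    (hz : IntegrableOn (fun x => x ^ z * f x) (Ioi (0:ℝ))) :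
    (∫ x in Ioi (0:ℝ), x ^ (a * y + b * z) * f x)
      ≤ (∫ x in Ioi (0:ℝ), x ^ y * f x) ^ a * (∫ x in Ioi (0:ℝ), x ^ z * f x) ^ b := by
  have ha1 : a < 1 := by linarith
  have hconj : Real.HolderConjugate (1 / a) (1 / b) := by
    constructor
    · rw [one_div, one_div, inv_inv, inv_inv, inv_one]; exact hab
    · positivity
    · positivity
  have key : ∀ w e : ℝ, 0 < e → IntegrableOn (fun x => x ^ w * f x) (Ioi (0:ℝ)) →
      MemLp (fun x => (x ^ w * f x) ^ e) (ENNReal.ofReal (1 / e))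
        (volume.restrict (Ioi (0:ℝ))) := by
    intro w e he hint
    have A : ENNReal.ofReal (1 / e) ≠ 0 := by
      rw [Ne, ENNReal.ofReal_eq_zero, not_le]; positivity
    have B : ENNReal.ofReal (1 / e) ≠ ⊤ := ENNReal.ofReal_ne_top
    have hmeas : AEStronglyMeasurable (fun x => (x ^ w * f x) ^ e)
        (volume.restrict (Ioi (0:ℝ))) :=
      ((my_measurable_rpow_const e).comp ((my_measurable_rpow_const w).mul hm)).aestronglyMeasurable
    rw [← memLp_norm_rpow_iff hmeas A B, ENNReal.toReal_ofReal (by positivity),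
      ENNReal.div_self A B, memLp_one_iff_integrable]
    apply Integrable.congr hint
    refine eventuallyEq_of_mem (self_mem_ae_restrict measurableSet_Ioi) fun x hx => ?_
    have hx0 : (0:ℝ) < x := hx
    have hb0 : 0 ≤ x ^ w * f x := mul_nonneg (Real.rpow_nonneg hx0.le w) (hnn x)
    rw [Real.norm_eq_abs, abs_of_nonneg (Real.rpow_nonneg hb0 e), ← Real.rpow_mul hb0,
      mul_one_div_cancel he.ne', Real.rpow_one]
  have hFnn : 0 ≤ᵐ[volume.restrict (Ioi (0:ℝ))] fun x => (x ^ y * f x) ^ a :=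
    (ae_restrict_mem measurableSet_Ioi).mono fun x hx =>
      Real.rpow_nonneg (mul_nonneg (Real.rpow_nonneg (le_of_lt hx) y) (hnn x)) a
  have hGnn : 0 ≤ᵐ[volume.restrict (Ioi (0:ℝ))] fun x => (x ^ z * f x) ^ b :=
    (ae_restrict_mem measurableSet_Ioi).mono fun x hx =>
      Real.rpow_nonneg (mul_nonneg (Real.rpow_nonneg (le_of_lt hx) z) (hnn x)) b
  have main := integral_mul_le_Lp_mul_Lq_of_nonneg hconj hFnn hGnn (key y a ha hy) (key z b hb hz)
  rw [one_div_one_div, one_div_one_div] at main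
  have eF : (∫ x in Ioi (0:ℝ), ((x ^ y * f x) ^ a) ^ ((1:ℝ) / a))
      = ∫ x in Ioi (0:ℝ), x ^ y * f x := by
    refine setIntegral_congr_fun measurableSet_Ioi fun x hx => ?_
    have hb0 : 0 ≤ x ^ y * f x := mul_nonneg (Real.rpow_nonneg (le_of_lt hx) y) (hnn x)
    rw [← Real.rpow_mul hb0, mul_one_div_cancel ha.ne', Real.rpow_one]
  have eG : (∫ x in Ioi (0:ℝ), ((x ^ z * f x) ^ b) ^ ((1:ℝ) / b))
      = ∫ x in Ioi (0:ℝ), x ^ z * f x := by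
    refine setIntegral_congr_fun measurableSet_Ioi fun x hx => ?_
    have hb0 : 0 ≤ x ^ z * f x := mul_nonneg (Real.rpow_nonneg (le_of_lt hx) z) (hnn x)
    rw [← Real.rpow_mul hb0, mul_one_div_cancel hb.ne', Real.rpow_one]
  have eFG : (∫ x in Ioi (0:ℝ), (x ^ y * f x) ^ a * (x ^ z * f x) ^ b)
      = ∫ x in Ioi (0:ℝ), x ^ (a * y + b * z) * f x := by
    refine setIntegral_congr_fun measurableSet_Ioi fun x hx => ?_
    have hx0 : (0:ℝ) < x := hx
    have h1 : (x ^ y * f x) ^ a = x ^ (a * y) * f x ^ a := by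
      rw [Real.mul_rpow (Real.rpow_nonneg hx0.le y) (hnn x), ← Real.rpow_mul hx0.le, mul_comm y a]
    have h2 : (x ^ z * f x) ^ b = x ^ (b * z) * f x ^ b := by
      rw [Real.mul_rpow (Real.rpow_nonneg hx0.le z) (hnn x), ← Real.rpow_mul hx0.le, mul_comm z b]
    have h3 : f x ^ a * f x ^ b = f x := by
      rw [← Real.rpow_add' (hnn x) (by rw [hab]; norm_num), hab, Real.rpow_one]
    have h4 : x ^ (a * y) * x ^ (b * z) = x ^ (a * y + b * z) := (Real.rpow_add hx0 _ _).symm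
    rw [h1, h2]
    linear_combination (x ^ (a * y) * x ^ (b * z)) * h3 + f x * h4
  rw [eFG] at main
  rw [eF, eG] at main
  exact main

/-- The arithmetic endgame: from the two Hölder interpolation bounds, deduce the
monotonicity of the moment complexity. -/
private lemma my_final (p q α mp mq MP MQ : ℝ)
    (hq : 0 < q) (hpq : q < p) (hα : 1 < α)
    (hmp : 0 < mp) (hmq : 0 < mq) (hMP : 0 < MP) (hMQ : 0 < MQ)
    (H1 : mp ≤ mq ^ ((α * p - p) / (α * p - q)) * MP ^ ((p - q) / (α * p - q)))
    (H2 : MQ ≤ mq ^ ((α * p - α * q) / (α * p - q)) * MP ^ ((α * q - q) / (α * p - q))) :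
    mp ^ ((1:ℝ) / p) / mq ^ ((1:ℝ) / q) ≤ MP ^ ((1:ℝ) / p) / MQ ^ ((1:ℝ) / q) := by
  have hp0 : 0 < p := hq.trans hpq
  have hD : 0 < α * p - q := by nlinarith
  have L1 : Real.log mp ≤ (α * p - p) / (α * p - q) * Real.log mq
      + (p - q) / (α * p - q) * Real.log MP := by
    have h5 := (Real.log_le_log_iff hmp
      (mul_pos (Real.rpow_pos_of_pos hmq _) (Real.rpow_pos_of_pos hMP _))).mpr H1
    rwa [Real.log_mul (Real.rpow_pos_of_pos hmq _).ne' (Real.rpow_pos_of_pos hMP _).ne',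
      Real.log_rpow hmq, Real.log_rpow hMP] at h5
  have L2 : Real.log MQ ≤ (α * p - α * q) / (α * p - q) * Real.log mq
      + (α * q - q) / (α * p - q) * Real.log MP := by
    have h5 := (Real.log_le_log_iff hMQ
      (mul_pos (Real.rpow_pos_of_pos hmq _) (Real.rpow_pos_of_pos hMP _))).mpr H2
    rwa [Real.log_mul (Real.rpow_pos_of_pos hmq _).ne' (Real.rpow_pos_of_pos hMP _).ne',
      Real.log_rpow hmq, Real.log_rpow hMP] at h5
  have H1m : (α * p - q) * Real.log mp
      ≤ (α * p - p) * Real.log mq + (p - q) * Real.log MP := by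
    have h5 := mul_le_mul_of_nonneg_left L1 hD.le
    have e : (α * p - q) * ((α * p - p) / (α * p - q) * Real.log mq
        + (p - q) / (α * p - q) * Real.log MP)
        = (α * p - p) * Real.log mq + (p - q) * Real.log MP := by
      field_simp
    linarith [h5, e]
  have H2m : (α * p - q) * Real.log MQ
      ≤ (α * p - α * q) * Real.log mq + (α * q - q) * Real.log MP := by
    have h5 := mul_le_mul_of_nonneg_left L2 hD.le
    have e : (α * p - q) * ((α * p - α * q) / (α * p - q) * Real.log mq
        + (α * q - q) / (α * p - q) * Real.log MP)
        = (α * p - α * q) * Real.log mq + (α * q - q) * Real.log MP := by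
      field_simp
    linarith [h5, e]
  have Gc : q * Real.log mp + p * Real.log MQ
      ≤ q * Real.log MP + p * Real.log mq := by
    have h6 := mul_le_mul_of_nonneg_left H1m hq.le
    have h7 := mul_le_mul_of_nonneg_left H2m hp0.le
    have h8 : (α * p - q) * (q * Real.log mp + p * Real.log MQ)
        ≤ (α * p - q) * (q * Real.log MP + p * Real.log mq) := by nlinarith [h6, h7]
    exact le_of_mul_le_mul_left h8 hD
  rw [Real.rpow_def_of_pos hmp, Real.rpow_def_of_pos hmq, Real.rpow_def_of_pos hMP,
    Real.rpow_def_of_pos hMQ, ← Real.exp_sub, ← Real.exp_sub, Real.exp_le_exp]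
  have h9 := mul_le_mul_of_nonneg_left Gc (by positivity : (0:ℝ) ≤ 1 / (p * q))
  have e1 : 1 / (p * q) * (q * Real.log mp + p * Real.log MQ)
      = Real.log mp * (1 / p) + Real.log MQ * (1 / q) := by
    field_simp
  have e2 : 1 / (p * q) * (q * Real.log MP + p * Real.log mq)
      = Real.log MP * (1 / p) + Real.log mq * (1 / q) := by
    field_simp
  linarith [h9, e1, e2]

/-- monotonicity of the moment complexity under the composed
transform `𝔇_γ𝔈_α𝔘_γ` (given here in closed form): `σ_p[h]/σ_q[h] ≥ σ_p[f]/σ_q[f]`. -/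
theorem moment_complexity_monotonicity
    (p q α γ c : ℝ)
    (hq : 0 < q) (hpq : q < p) (hα : 1 ≤ α) (hγ : γ ≠ 2)
    (hc : c = α * |2 - γ|)
    (f h : ℝ → ℝ)
    (hf_meas : Measurable f)
    (hf_nonneg : ∀ x, 0 ≤ f x)
    (hf_supp : ∀ x ≤ (0 : ℝ), f x = 0)
    (hf_int : (∫ x, f x) = 1)
    (hh_pos : ∀ s > (0 : ℝ),
      h s = (c * s) ^ ((1 - α) / α) * f ((c * s) ^ ((1 : ℝ) / α) / |2 - γ|))
    (hh_nonpos : ∀ s ≤ (0 : ℝ), h s = 0)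
    (hfin1 : Integrable (fun x => |x| ^ p * f x))
    (hfin2 : Integrable (fun x => |x| ^ q * f x))
    (hfin3 : Integrable (fun s => |s| ^ p * h s))
    (hfin4 : Integrable (fun s => |s| ^ q * h s))
    (hne1 : (∫ x, |x| ^ p * f x) ≠ 0)
    (hne2 : (∫ x, |x| ^ q * f x) ≠ 0)
    (hne3 : (∫ s, |s| ^ p * h s) ≠ 0)
    (hne4 : (∫ s, |s| ^ q * h s) ≠ 0) :
    ((∀ s, 0 ≤ h s) ∧ (∫ s, h s) = 1)
    ∧ (∫ s, |s| ^ p * h s) ^ ((1 : ℝ) / p) / (∫ s, |s| ^ q * h s) ^ ((1 : ℝ) / q)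
        ≥ (∫ x, |x| ^ p * f x) ^ ((1 : ℝ) / p) / (∫ x, |x| ^ q * f x) ^ ((1 : ℝ) / q) := by
  have hp0 : 0 < p := hq.trans hpq
  have hbb0 : 0 < |2 - γ| := abs_pos.mpr (sub_ne_zero.mpr (Ne.symm hγ))
  have hα0 : 0 < α := lt_of_lt_of_le one_pos hα
  have hc0 : 0 < c := by rw [hc]; positivity
  have hh_nonneg : ∀ s, 0 ≤ h s := by
    intro s
    rcases le_or_gt s 0 with hs | hs
    · rw [hh_nonpos s hs]
    · rw [hh_pos s hs]
      exact mul_nonneg (Real.rpow_nonneg (by positivity) _) (hf_nonneg _)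
  have hIf : ∀ r : ℝ, (∫ x, |x| ^ r * f x) = ∫ x in Ioi (0:ℝ), x ^ r * f x := by
    intro r
    have h0 : ∀ x, x ∉ Ioi (0:ℝ) → |x| ^ r * f x = 0 := fun x hx => by
      rw [hf_supp x (by simpa using hx), mul_zero]
    rw [← setIntegral_eq_integral_of_forall_compl_eq_zero h0]
    exact setIntegral_congr_fun measurableSet_Ioi fun x hx => by rw [abs_of_pos hx]
  have hIh : ∀ r : ℝ, (∫ s, |s| ^ r * h s) = ∫ s in Ioi (0:ℝ), s ^ r * h s := by
    intro r
    have h0 : ∀ s, s ∉ Ioi (0:ℝ) → |s| ^ r * h s = 0 := fun s hs => by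
      rw [hh_nonpos s (by simpa using hs), mul_zero]
    rw [← setIntegral_eq_integral_of_forall_compl_eq_zero h0]
    exact setIntegral_congr_fun measurableSet_Ioi fun s hs => by rw [abs_of_pos hs]
  have hcv : ∀ r : ℝ, (∫ s in Ioi (0:ℝ), s ^ r * h s)
      = (|2 - γ| ^ α / c) ^ r * ∫ x in Ioi (0:ℝ), x ^ (α * r) * f x := by
    intro r
    have e1 : (∫ s in Ioi (0:ℝ), s ^ r * h s)
        = ∫ s in Ioi (0:ℝ),
            s ^ r * ((c * s) ^ ((1 - α) / α) * f ((c * s) ^ ((1:ℝ) / α) / |2 - γ|)) :=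
      setIntegral_congr_fun measurableSet_Ioi fun s hs => by rw [hh_pos s hs]
    rw [e1]
    exact (my_cv f α c (|2 - γ|) r hα0 hbb0 hc).1
  have hinth : ∀ r : ℝ, Integrable (fun s => |s| ^ r * h s) →
      IntegrableOn (fun x => x ^ (α * r) * f x) (Ioi (0:ℝ)) := by
    intro r hr
    have h1 : IntegrableOn (fun s => s ^ r * ((c * s) ^ ((1 - α) / α)
        * f ((c * s) ^ ((1:ℝ) / α) / |2 - γ|))) (Ioi (0:ℝ)) := by
      refine (integrableOn_congr_fun (fun s hs => ?_) measurableSet_Ioi).mp hr.integrableOn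
      rw [abs_of_pos hs, hh_pos s hs]
    exact ((my_cv f α c (|2 - γ|) r hα0 hbb0 hc).2).mp h1
  have hintf : ∀ r : ℝ, Integrable (fun x => |x| ^ r * f x) →
      IntegrableOn (fun x => x ^ r * f x) (Ioi (0:ℝ)) := by
    intro r hr
    exact (integrableOn_congr_fun (fun x hx => by rw [abs_of_pos hx]) measurableSet_Ioi).mp
      hr.integrableOn
  have hf1 : (∫ x in Ioi (0:ℝ), f x) = 1 := by
    rw [setIntegral_eq_integral_of_forall_compl_eq_zero
      (fun x hx => hf_supp x (by simpa using hx)), hf_int]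
  have hint1 : (∫ s, h s) = 1 := by
    have e0 := hcv 0
    simp only [Real.rpow_zero, one_mul, mul_zero] at e0
    rw [← setIntegral_eq_integral_of_forall_compl_eq_zero
      (s := Ioi (0:ℝ)) (fun s hs => hh_nonpos s (by simpa using hs)), e0, hf1]
  refine ⟨⟨hh_nonneg, hint1⟩, ?_⟩
  -- positivity of the four moments
  have hnnI : ∀ r : ℝ, 0 ≤ ∫ x in Ioi (0:ℝ), x ^ r * f x := fun r =>
    setIntegral_nonneg measurableSet_Ioi fun x hx =>
      mul_nonneg (Real.rpow_nonneg (le_of_lt hx) _) (hf_nonneg x)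
  rw [hIf p] at hne1
  rw [hIf q] at hne2
  rw [hIh p, hcv p] at hne3
  rw [hIh q, hcv q] at hne4
  have hmp0 : 0 < ∫ x in Ioi (0:ℝ), x ^ p * f x := lt_of_le_of_ne (hnnI p) (Ne.symm hne1)
  have hmq0 : 0 < ∫ x in Ioi (0:ℝ), x ^ q * f x := lt_of_le_of_ne (hnnI q) (Ne.symm hne2)
  have hMP0 : 0 < ∫ x in Ioi (0:ℝ), x ^ (α * p) * f x :=
    lt_of_le_of_ne (hnnI (α * p)) (Ne.symm (right_ne_zero_of_mul hne3))
  have hMQ0 : 0 < ∫ x in Ioi (0:ℝ), x ^ (α * q) * f x :=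
    lt_of_le_of_ne (hnnI (α * q)) (Ne.symm (right_ne_zero_of_mul hne4))
  have hk0 : 0 < |2 - γ| ^ α / c := by positivity
  rw [ge_iff_le, hIf p, hIf q, hIh p, hcv p, hIh q, hcv q,
    Real.mul_rpow (Real.rpow_nonneg hk0.le p) (hnnI (α * p)),
    Real.mul_rpow (Real.rpow_nonneg hk0.le q) (hnnI (α * q)),
    ← Real.rpow_mul hk0.le, ← Real.rpow_mul hk0.le,
    mul_one_div_cancel hp0.ne', mul_one_div_cancel hq.ne',
    Real.rpow_one,
    mul_div_mul_left _ _ (ne_of_gt hk0)]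
  rcases eq_or_lt_of_le hα with heq | hαgt
  · rw [← heq, one_mul, one_mul]
  · have hD : 0 < α * p - q := by nlinarith
    have hIq' : IntegrableOn (fun x => x ^ q * f x) (Ioi (0:ℝ)) := hintf q hfin2
    have hIP' : IntegrableOn (fun x => x ^ (α * p) * f x) (Ioi (0:ℝ)) := hinth p hfin3
    have ha1 : 0 < (α * p - p) / (α * p - q) := div_pos (by nlinarith) hD
    have hb1 : 0 < (p - q) / (α * p - q) := div_pos (by linarith) hD
    have hab1 : (α * p - p) / (α * p - q) + (p - q) / (α * p - q) = 1 := by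
      field_simp
      ring
    have H1 := my_holder f hf_meas hf_nonneg q (α * p) _ _ ha1 hb1 hab1 hIq' hIP'
    have hexp1 : (α * p - p) / (α * p - q) * q + (p - q) / (α * p - q) * (α * p) = p := by
      field_simp
      ring
    rw [hexp1] at H1
    have ha2 : 0 < (α * p - α * q) / (α * p - q) := div_pos (by nlinarith) hD
    have hb2 : 0 < (α * q - q) / (α * p - q) := div_pos (by nlinarith) hD
    have hab2 : (α * p - α * q) / (α * p - q) + (α * q - q) / (α * p - q) = 1 := by
      field_simp
      ring
    have H2 := my_holder f hf_meas hf_nonneg q (α * p) _ _ ha2 hb2 hab2 hIq' hIP'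
    have hexp2 : (α * p - α * q) / (α * p - q) * q + (α * q - q) / (α * p - q) * (α * p)
        = α * q := by
      field_simp
      ring
    rw [hexp2] at H2
    exact my_final p q α _ _ _ _ hq hpq hαgt hmp0 hmq0 hMP0 hMQ0 H1 H2
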